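/- Let d ≥ 1 and ε > 0. Let g : ℝ^d × ℝ^d → [0,∞] be measurable with respect to the product of the Lebesgue σ-algebra in the first variable and the Borel σ-algebra in the second variable, and ℤ^d-periodic in its second variable. Then ∫_{ℝ^d} g(x, x/ε) dx = ∫_{ℝ^d} ∫_Y g(S_ε(x,y), y) dy dx, as an identity in [0,∞]. -/

import Mathlib

open MeasureTheory Set

/-- **Periodic unfolding identity** (paper's Lemma 2.1).
For `g : ℝ^d × ℝ^d → [0,∞]` measurable with respect to the product of the Lebesgue
σ-algebra (first variable) and the Borel σ-algebra (second variable), and `ℤ^d`-periodic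
in the second variable, one has
`∫_{ℝ^d} g(x, x/ε) dx = ∫_{ℝ^d} ∫_Y g(S_ε(x,y), y) dy dx` in `[0,∞]`,
where `Y = (0,1)^d` and `S_ε(x,y) = ε(⌊x/ε⌋ + y)`. -/
theorem twoScale_unfolding_identity
    (d : ℕ) (hd : 1 ≤ d) (ε : ℝ) (hε : 0 < ε)
    (g : (Fin d → ℝ) → (Fin d → ℝ) → ENNReal)
    (hmeas : @Measurable ((Fin d → ℝ) × (Fin d → ℝ)) ENNReal
      (MeasurableSpace.prod
        (inferInstanceAs (MeasurableSpace (NullMeasurableSpace (Fin d → ℝ) volume)))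
        inferInstance)
      inferInstance
      (fun p => g p.1 p.2))
    (hper : ∀ (x y : Fin d → ℝ) (k : Fin d → ℤ),
      g x (y + fun i => (k i : ℝ)) = g x y) :
    ∫⁻ x, g x (fun i => x i / ε)
      = ∫⁻ x : Fin d → ℝ, ∫⁻ y in univ.pi fun _ : Fin d => Ioo (0 : ℝ) 1,
          g (fun i => ε * ((⌊x i / ε⌋ : ℝ) + y i)) y := by
  classical
  have hne : ε ≠ 0 := hε.ne'
  set Yset : Set (Fin d → ℝ) := univ.pi fun _ : Fin d => Ioo (0 : ℝ) 1 with hY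
  set Dset : Set (Fin d → ℝ) := univ.pi fun _ : Fin d => Ico (0 : ℝ) 1 with hD
  -- scaling change of variables
  have key : ∀ f : (Fin d → ℝ) → ENNReal,
      ∫⁻ x, f x = ENNReal.ofReal (ε ^ d) * ∫⁻ z, f (ε • z) := by
    intro f
    have hemb : MeasurableEmbedding (fun z : Fin d → ℝ => ε • z) :=
      (Homeomorph.smulOfNeZero ε hne).toMeasurableEquiv.measurableEmbedding
    have hmap : Measure.map (fun z : Fin d → ℝ => ε • z) volume
        = ENNReal.ofReal ((ε ^ d)⁻¹) • volume := by
      have h := Measure.map_addHaar_smul (volume : Measure (Fin d → ℝ)) hne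
      rw [h, abs_of_pos (inv_pos.2 (pow_pos hε _))]
      congr 2
      simp [Module.finrank_fintype_fun_eq_card]
    have hcomp : ∫⁻ z, f (ε • z) = ENNReal.ofReal ((ε ^ d)⁻¹) * ∫⁻ x, f x := by
      rw [← hemb.lintegral_map, hmap, lintegral_smul_measure, smul_eq_mul]
    rw [hcomp, ← mul_assoc, ← ENNReal.ofReal_mul (le_of_lt (pow_pos hε d)),
      mul_inv_cancel₀ (pow_ne_zero d hne), ENNReal.ofReal_one, one_mul]
  have hdiv : ∀ (z : Fin d → ℝ) (i : Fin d), (ε • z) i / ε = z i := by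
    intro z i
    simp only [Pi.smul_apply, smul_eq_mul]
    exact mul_div_cancel_left₀ _ hne
  -- the ε = 1 core identity
  have main : ∫⁻ z : Fin d → ℝ, g (ε • z) (fun i => z i)
      = ∫⁻ z : Fin d → ℝ, ∫⁻ y in Yset,
          g (fun i => ε * ((⌊z i⌋ : ℝ) + y i)) y := by
    set b := Pi.basisFun ℝ (Fin d) with hb
    haveI : Countable ↥(Submodule.span ℤ (Set.range ⇑b)).toAddSubgroup :=
      inferInstanceAs (Countable (Submodule.span ℤ (Set.range ⇑b)))
    have hfd := ZSpan.isAddFundamentalDomain' b (volume : Measure (Fin d → ℝ))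
    have hDb : ZSpan.fundamentalDomain b = Dset := ZSpan.fundamentalDomain_pi_basisFun
    -- the two cubes agree a.e.
    have hvolD : volume Dset = 1 := by
      rw [hD, volume_pi_pi]
      simp
    have hvolY : volume Yset = 1 := by
      rw [hY, volume_pi_pi]
      simp
    have hsub : Yset ⊆ Dset := pi_mono fun i _ => Ioo_subset_Ico_self
    have hae : Dset =ᵐ[volume] Yset := by
      rw [MeasureTheory.ae_eq_set]
      constructor
      · have := measure_diff hsub
          ((MeasurableSet.univ_pi fun i => measurableSet_Ioo).nullMeasurableSet)
          (by rw [hvolY]; exact ENNReal.one_ne_top)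
        rw [this, hvolD, hvolY, tsub_self]
      · rw [diff_eq_empty.2 hsub, measure_empty]
    have hres : volume.restrict Dset = volume.restrict Yset :=
      Measure.restrict_congr_set hae
    rw [hfd.lintegral_eq_tsum'' (fun z => g (ε • z) (fun i => z i)),
      hfd.lintegral_eq_tsum'' (fun z => ∫⁻ y in Yset,
        g (fun i => ε * ((⌊z i⌋ : ℝ) + y i)) y)]
    refine tsum_congr fun v => ?_
    obtain ⟨k, hk⟩ : ∃ k : Fin d → ℤ, ((v : Fin d → ℝ)) = fun i => ((k i : ℤ) : ℝ) := by
      have hv : (v : Fin d → ℝ) ∈ Submodule.span ℤ (Set.range ⇑b) := v.2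
      rw [Module.Basis.mem_span_iff_repr_mem] at hv
      choose n hn using hv
      refine ⟨n, funext fun i => ?_⟩
      have h := hn i
      rw [Pi.basisFun_repr] at h
      rw [← h]
      simp [algebraMap_int_eq]
    have hvadd : ∀ z : Fin d → ℝ, (v +ᵥ z) = (v : Fin d → ℝ) + z := fun z => rfl
    rw [hDb]
    set c : ENNReal := ∫⁻ y in Yset, g (fun i => ε * ((k i : ℝ) + y i)) y with hc
    have hmeasD : MeasurableSet Dset := MeasurableSet.univ_pi fun i => measurableSet_Ico
    have hL : (∫⁻ z in Dset, g (ε • (v +ᵥ z)) (fun i => (v +ᵥ z) i)) = c := by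
      have hptw : ∀ z : Fin d → ℝ,
          g (ε • (v +ᵥ z)) (fun i => (v +ᵥ z) i) = g (fun i => ε * ((k i : ℝ) + z i)) z := by
        intro z
        have h2 : (fun i => (v +ᵥ z) i) = z + fun i => ((k i : ℤ) : ℝ) := by
          funext i
          simp [hvadd, hk, add_comm]
        have h1 : ε • (v +ᵥ z) = fun i => ε * ((k i : ℝ) + z i) := by
          funext i
          simp [hvadd, hk]
        rw [h2, h1, hper]
      rw [lintegral_congr hptw, hres]
    have hR : (∫⁻ z in Dset, ∫⁻ y in Yset,
        g (fun i => ε * ((⌊(v +ᵥ z) i⌋ : ℝ) + y i)) y) = c := by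
      have hcongr : ∀ᵐ z ∂(volume : Measure (Fin d → ℝ)), z ∈ Dset →
          (∫⁻ y in Yset, g (fun i => ε * ((⌊(v +ᵥ z) i⌋ : ℝ) + y i)) y) = c := by
        refine ae_of_all _ fun z hz => ?_
        have hfloor : ∀ i, ⌊(v +ᵥ z) i⌋ = k i := by
          intro i
          have hzi : z i ∈ Ico (0 : ℝ) 1 := hz i (mem_univ i)
          have : ⌊z i⌋ = 0 := Int.floor_eq_zero_iff.2 hzi
          rw [hvadd]
          simp only [Pi.add_apply, hk]
          rw [Int.floor_intCast_add, this, add_zero]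
        rw [hc]
        congr 1
        funext y
        congr 1
        funext i
        rw [hfloor i]
      rw [setLIntegral_congr_fun_ae hmeasD hcongr, setLIntegral_const, hvolD, mul_one]
    exact hL.trans hR.symm
  calc ∫⁻ x, g x (fun i => x i / ε)
      = ENNReal.ofReal (ε ^ d) * ∫⁻ z : Fin d → ℝ, g (ε • z) (fun i => (ε • z) i / ε) :=
        key (fun x => g x (fun i => x i / ε))
    _ = ENNReal.ofReal (ε ^ d) * ∫⁻ z : Fin d → ℝ, ∫⁻ y in Yset,
          g (fun i => ε * ((⌊z i⌋ : ℝ) + y i)) y := by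
        congr 1
        simp only [hdiv]
        exact main
    _ = ∫⁻ x : Fin d → ℝ, ∫⁻ y in Yset, g (fun i => ε * ((⌊x i / ε⌋ : ℝ) + y i)) y := by
        have h := key (fun x => ∫⁻ y in Yset, g (fun i => ε * ((⌊x i / ε⌋ : ℝ) + y i)) y)
        rw [h]
        congr 1
        refine lintegral_congr fun z => ?_
        simp only [hdiv]
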